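/- Every strongly β-normalizing pure λ-term is the essence of some well-typed LF_Δ object: if M is strongly normalizing then there exists a signature Σ, a context Γ, an LF_Δ term Δ and a type σ such that Γ ⊢_Σ Δ : σ and the essence of Δ equals M. -/

import Mathlib

set_option autoImplicit false

namespace LFDelta

/-- Equivalence closure of a relation (conversion). -/
inductive Conv {α : Type} (r : α → α → Prop) : α → α → Prop
| rel {a b : α} : r a b → Conv r a b
| refl (a : α) : Conv r a a
| symm {a b : α} : Conv r a b → Conv r b a
| trans {a b c : α} : Conv r a b → Conv r b c → Conv r a c

/-- Types of the intersection-union type assignment system B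
    (with ⊤, used only for the extended system B⁺). -/
inductive BTy : Type
| atom (a : ℕ)
| top
| arr (σ τ : BTy)
| inter (σ τ : BTy)
| union (σ τ : BTy)
deriving DecidableEq

/-- ω-free types of system B. -/
def BTy.OmegaFree : BTy → Prop
| .atom _ => True
| .top => False
| .arr σ τ => σ.OmegaFree ∧ τ.OmegaFree
| .inter σ τ => σ.OmegaFree ∧ τ.OmegaFree
| .union σ τ => σ.OmegaFree ∧ τ.OmegaFree

/-- Untyped λ-terms (de Bruijn), possibly containing constants
    (the constants c, c_× and c_{|σ|} are used for translations). -/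
inductive Lam : Type
| var (n : ℕ)
| app (M N : Lam)
| lam (M : Lam)
| const (c : ℕ)
| cx
| cty (σ : BTy)
deriving DecidableEq

namespace Lam

/-- Pure λ-terms: no constants. -/
def Pure : Lam → Prop
| .var _ => True
| .app M N => Pure M ∧ Pure N
| .lam M => Pure M
| _ => False

/-- Lift (shift) free variables ≥ c by one. -/
def lift (c : ℕ) : Lam → Lam
| .var n => if n < c then .var n else .var (n+1)
| .app M N => .app (lift c M) (lift c N)
| .lam M => .lam (lift (c+1) M)
| .const k => .const k
| .cx => .cx
| .cty σ => .cty σ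

/-- Substitute N for variable k. -/
def subst (k : ℕ) (N : Lam) : Lam → Lam
| .var n => if n < k then .var n else if n = k then (lift 0)^[k] N else .var (n-1)
| .app M₁ M₂ => .app (subst k N M₁) (subst k N M₂)
| .lam M => .lam (subst (k+1) N M)
| .const c => .const c
| .cx => .cx
| .cty σ => .cty σ

/-- One-step β-reduction. -/
inductive StepB : Lam → Lam → Prop
| beta {M N : Lam} : StepB (.app (.lam M) N) (subst 0 N M)
| appL {M M' N : Lam} : StepB M M' → StepB (.app M N) (.app M' N)
| appR {M N N' : Lam} : StepB N N' → StepB (.app M N) (.app M N')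
| lam {M M' : Lam} : StepB M M' → StepB (.lam M) (.lam M')

/-- One-step η-reduction. -/
inductive StepE : Lam → Lam → Prop
| eta {M : Lam} : StepE (.lam (.app (lift 0 M) (.var 0))) M
| appL {M M' N : Lam} : StepE M M' → StepE (.app M N) (.app M' N)
| appR {M N N' : Lam} : StepE N N' → StepE (.app M N) (.app M N')
| lam {M M' : Lam} : StepE M M' → StepE (.lam M) (.lam M')

/-- β-convertibility. -/
def BetaEq : Lam → Lam → Prop := Conv StepB

/-- βη-convertibility. -/
def BetaEtaEq : Lam → Lam → Prop := Conv (fun a b => StepB a b ∨ StepE a b)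

/-- Strong β-normalization. -/
def SNBeta (M : Lam) : Prop := Acc (fun a b => StepB b a) M

end Lam

/-- The subtype theory Ξ of system B without the ω-axioms (5) and (13),
    i.e. axioms/rules (1)-(4), (6)-(12), (14). -/
inductive SubB : BTy → BTy → Prop
| idemInter {σ : BTy} : SubB σ (.inter σ σ)                                  -- (1)
| idemUnion {σ : BTy} : SubB (.union σ σ) σ                                  -- (2)
| interL {σ τ : BTy} : SubB (.inter σ τ) σ                                   -- (3)
| interR {σ τ : BTy} : SubB (.inter σ τ) τ                                   -- (3)
| unionL {σ τ : BTy} : SubB σ (.union σ τ)                                   -- (4)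
| unionR {σ τ : BTy} : SubB τ (.union σ τ)                                   -- (4)
| refl {σ : BTy} : SubB σ σ                                                  -- (6)
| monoInter {σ₁ σ₂ τ₁ τ₂ : BTy} :
    SubB σ₁ σ₂ → SubB τ₁ τ₂ → SubB (.inter σ₁ τ₁) (.inter σ₂ τ₂)             -- (7)
| monoUnion {σ₁ σ₂ τ₁ τ₂ : BTy} :
    SubB σ₁ σ₂ → SubB τ₁ τ₂ → SubB (.union σ₁ τ₁) (.union σ₂ τ₂)             -- (8)
| trans {σ τ ρ : BTy} : SubB σ τ → SubB τ ρ → SubB σ ρ                        -- (9)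
| dist {σ τ ρ : BTy} :
    SubB (.inter σ (.union τ ρ)) (.union (.inter σ τ) (.inter σ ρ))          -- (10)
| arrInter {σ τ ρ : BTy} :
    SubB (.inter (.arr σ τ) (.arr σ ρ)) (.arr σ (.inter τ ρ))                -- (11)
| arrUnion {σ τ ρ : BTy} :
    SubB (.inter (.arr σ ρ) (.arr τ ρ)) (.arr (.union σ τ) ρ)                -- (12)
| arrow {σ₁ σ₂ τ₁ τ₂ : BTy} :
    SubB σ₂ σ₁ → SubB τ₁ τ₂ → SubB (.arr σ₁ τ₁) (.arr σ₂ τ₂)                  -- (14)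

/-- The subtype theory Ξ' (Ξ without (5), (10), (13)), parametrized by
    additional axioms `ax`. -/
inductive Xi' (ax : BTy → BTy → Prop) : BTy → BTy → Prop
| ax {σ τ : BTy} : ax σ τ → Xi' ax σ τ
| idemInter {σ : BTy} : Xi' ax σ (.inter σ σ)
| idemUnion {σ : BTy} : Xi' ax (.union σ σ) σ
| interL {σ τ : BTy} : Xi' ax (.inter σ τ) σ
| interR {σ τ : BTy} : Xi' ax (.inter σ τ) τ
| unionL {σ τ : BTy} : Xi' ax σ (.union σ τ)
| unionR {σ τ : BTy} : Xi' ax τ (.union σ τ)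
| refl {σ : BTy} : Xi' ax σ σ
| monoInter {σ₁ σ₂ τ₁ τ₂ : BTy} :
    Xi' ax σ₁ σ₂ → Xi' ax τ₁ τ₂ → Xi' ax (.inter σ₁ τ₁) (.inter σ₂ τ₂)
| monoUnion {σ₁ σ₂ τ₁ τ₂ : BTy} :
    Xi' ax σ₁ σ₂ → Xi' ax τ₁ τ₂ → Xi' ax (.union σ₁ τ₁) (.union σ₂ τ₂)
| trans {σ τ ρ : BTy} : Xi' ax σ τ → Xi' ax τ ρ → Xi' ax σ ρ
| arrInter {σ τ ρ : BTy} :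
    Xi' ax (.inter (.arr σ τ) (.arr σ ρ)) (.arr σ (.inter τ ρ))
| arrUnion {σ τ ρ : BTy} :
    Xi' ax (.inter (.arr σ ρ) (.arr τ ρ)) (.arr (.union σ τ) ρ)
| arrow {σ₁ σ₂ τ₁ τ₂ : BTy} :
    Xi' ax σ₂ σ₁ → Xi' ax τ₁ τ₂ → Xi' ax (.arr σ₁ τ₁) (.arr σ₂ τ₂)

/-- Type assignment of system B (Curry style), extended with constant
    typing axioms `ξ` and the constants c_× and c_{|σ|} of B⁺.
    With `ξ := fun _ _ => False` and on pure terms this is exactly system B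
    without ω. -/
inductive BPlus (ξ : ℕ → BTy → Prop) : List BTy → Lam → BTy → Prop
| var {Γ : List BTy} {n : ℕ} {σ : BTy} :
    Γ[n]? = some σ → BPlus ξ Γ (.var n) σ
| const {Γ : List BTy} {c : ℕ} {σ : BTy} : ξ c σ → BPlus ξ Γ (.const c) σ
| cx {Γ : List BTy} : BPlus ξ Γ .cx (.arr .top (.arr .top .top))
| cty {Γ : List BTy} {σ : BTy} :
    BPlus ξ Γ (.cty σ) (.arr .top (.arr (.arr σ .top) .top))
| abs {Γ : List BTy} {M : Lam} {σ τ : BTy} :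
    BPlus ξ (σ :: Γ) M τ → BPlus ξ Γ (.lam M) (.arr σ τ)
| app {Γ : List BTy} {M N : Lam} {σ τ : BTy} :
    BPlus ξ Γ M (.arr σ τ) → BPlus ξ Γ N σ → BPlus ξ Γ (.app M N) τ
| interI {Γ : List BTy} {M : Lam} {σ τ : BTy} :
    BPlus ξ Γ M σ → BPlus ξ Γ M τ → BPlus ξ Γ M (.inter σ τ)
| interEl {Γ : List BTy} {M : Lam} {σ τ : BTy} :
    BPlus ξ Γ M (.inter σ τ) → BPlus ξ Γ M σ
| interEr {Γ : List BTy} {M : Lam} {σ τ : BTy} :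
    BPlus ξ Γ M (.inter σ τ) → BPlus ξ Γ M τ
| unionIl {Γ : List BTy} {M : Lam} {σ τ : BTy} :
    BPlus ξ Γ M σ → BPlus ξ Γ M (.union σ τ)
| unionIr {Γ : List BTy} {M : Lam} {σ τ : BTy} :
    BPlus ξ Γ M τ → BPlus ξ Γ M (.union σ τ)
| unionE {Γ : List BTy} {M N : Lam} {σ τ ρ : BTy} :
    BPlus ξ (σ :: Γ) M ρ → BPlus ξ (τ :: Γ) M ρ → BPlus ξ Γ N (.union σ τ) →
    BPlus ξ Γ (Lam.subst 0 N M) ρ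
| sub {Γ : List BTy} {M : Lam} {σ τ : BTy} :
    BPlus ξ Γ M σ → SubB σ τ → BPlus ξ Γ M τ

/-- The pseudo-terms of LF_Δ: kinds, families and objects in a single syntax
    (the typing judgments single out each syntactic class). -/
inductive Tm : Type
| type                        -- the kind Type
| pi (σ τ : Tm)               -- Πx:σ.K and Πx:σ.τ
| rarr (σ τ : Tm)             -- relevant family σ →ʳ τ
| inter (σ τ : Tm)            -- intersection family
| union (σ τ : Tm)            -- union family
| const (c : ℕ)               -- constants (family- and object-level)
| var (n : ℕ)                 -- variables (de Bruijn)
| lam (σ Δ : Tm)              -- λx:σ.Δ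
| app (Δ₁ Δ₂ : Tm)            -- application (of families and of objects)
| rlam (σ Δ : Tm)             -- relevant abstraction λʳx:σ.Δ
| rapp (Δ₁ Δ₂ : Tm)           -- relevant application
| pair (Δ₁ Δ₂ : Tm)           -- strong pair ⟨Δ₁,Δ₂⟩
| copair (Δ₁ Δ₂ : Tm)         -- strong co-pair [Δ₁,Δ₂]
| prl (Δ : Tm)                -- left projection
| prr (Δ : Tm)                -- right projection
| inl (σ Δ : Tm)              -- injection in_l^σ Δ
| inr (σ Δ : Tm)              -- injection in_r^σ Δ
deriving DecidableEq

namespace Tm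

/-- Lift free variables ≥ c by one. -/
def lift (c : ℕ) : Tm → Tm
| .type => .type
| .pi σ τ => .pi (lift c σ) (lift (c+1) τ)
| .rarr σ τ => .rarr (lift c σ) (lift c τ)
| .inter σ τ => .inter (lift c σ) (lift c τ)
| .union σ τ => .union (lift c σ) (lift c τ)
| .const k => .const k
| .var n => if n < c then .var n else .var (n+1)
| .lam σ Δ => .lam (lift c σ) (lift (c+1) Δ)
| .app Δ₁ Δ₂ => .app (lift c Δ₁) (lift c Δ₂)
| .rlam σ Δ => .rlam (lift c σ) (lift (c+1) Δ)
| .rapp Δ₁ Δ₂ => .rapp (lift c Δ₁) (lift c Δ₂)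
| .pair Δ₁ Δ₂ => .pair (lift c Δ₁) (lift c Δ₂)
| .copair Δ₁ Δ₂ => .copair (lift c Δ₁) (lift c Δ₂)
| .prl Δ => .prl (lift c Δ)
| .prr Δ => .prr (lift c Δ)
| .inl σ Δ => .inl (lift c σ) (lift c Δ)
| .inr σ Δ => .inr (lift c σ) (lift c Δ)

/-- Substitute the object N for variable k. -/
def subst (k : ℕ) (N : Tm) : Tm → Tm
| .type => .type
| .pi σ τ => .pi (subst k N σ) (subst (k+1) N τ)
| .rarr σ τ => .rarr (subst k N σ) (subst k N τ)
| .inter σ τ => .inter (subst k N σ) (subst k N τ)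
| .union σ τ => .union (subst k N σ) (subst k N τ)
| .const c => .const c
| .var n => if n < k then .var n else if n = k then (lift 0)^[k] N else .var (n-1)
| .lam σ Δ => .lam (subst k N σ) (subst (k+1) N Δ)
| .app Δ₁ Δ₂ => .app (subst k N Δ₁) (subst k N Δ₂)
| .rlam σ Δ => .rlam (subst k N σ) (subst (k+1) N Δ)
| .rapp Δ₁ Δ₂ => .rapp (subst k N Δ₁) (subst k N Δ₂)
| .pair Δ₁ Δ₂ => .pair (subst k N Δ₁) (subst k N Δ₂)
| .copair Δ₁ Δ₂ => .copair (subst k N Δ₁) (subst k N Δ₂)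
| .prl Δ => .prl (subst k N Δ)
| .prr Δ => .prr (subst k N Δ)
| .inl σ Δ => .inl (subst k N σ) (subst k N Δ)
| .inr σ Δ => .inr (subst k N σ) (subst k N Δ)

end Tm

/-- The essence function: compositionally erases all type annotations and
    proof-functional constructs (on non-objects it returns a dummy value). -/
def essence : Tm → Lam
| .var n => .var n
| .const c => .const c
| .lam _ Δ => .lam (essence Δ)
| .rlam _ Δ => .lam (essence Δ)
| .app Δ₁ Δ₂ => .app (essence Δ₁) (essence Δ₂)
| .rapp _ Δ₂ => essence Δ₂
| .pair Δ₁ _ => essence Δ₁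
| .copair Δ₁ _ => essence Δ₁
| .prl Δ => essence Δ
| .prr Δ => essence Δ
| .inl _ Δ => essence Δ
| .inr _ Δ => essence Δ
| .type => .const 0
| .pi _ _ => .const 0
| .rarr _ _ => .const 0
| .inter _ _ => .const 0
| .union _ _ => .const 0

/-- One-step reduction →_Δ of LF_Δ. Congruence rules are standard, except
    that the components of strong pairs and co-pairs must reduce in parallel,
    keeping identical essences. -/
inductive Step : Tm → Tm → Prop
| beta {σ Δ₁ Δ₂ : Tm} : Step (.app (.lam σ Δ₁) Δ₂) (Tm.subst 0 Δ₂ Δ₁)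
| rbeta {σ Δ₁ Δ₂ : Tm} : Step (.rapp (.rlam σ Δ₁) Δ₂) (Tm.subst 0 Δ₂ Δ₁)
| prl {Δ₁ Δ₂ : Tm} : Step (.prl (.pair Δ₁ Δ₂)) Δ₁
| prr {Δ₁ Δ₂ : Tm} : Step (.prr (.pair Δ₁ Δ₂)) Δ₂
| coInl {Δ₁ Δ₂ σ Δ₃ : Tm} :
    Step (.app (.copair Δ₁ Δ₂) (.inl σ Δ₃)) (.app Δ₁ Δ₃)
| coInr {Δ₁ Δ₂ σ Δ₃ : Tm} :
    Step (.app (.copair Δ₁ Δ₂) (.inr σ Δ₃)) (.app Δ₂ Δ₃)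
| piL {σ σ' τ : Tm} : Step σ σ' → Step (.pi σ τ) (.pi σ' τ)
| piR {σ τ τ' : Tm} : Step τ τ' → Step (.pi σ τ) (.pi σ τ')
| rarrL {σ σ' τ : Tm} : Step σ σ' → Step (.rarr σ τ) (.rarr σ' τ)
| rarrR {σ τ τ' : Tm} : Step τ τ' → Step (.rarr σ τ) (.rarr σ τ')
| interL {σ σ' τ : Tm} : Step σ σ' → Step (.inter σ τ) (.inter σ' τ)
| interR {σ τ τ' : Tm} : Step τ τ' → Step (.inter σ τ) (.inter σ τ')
| unionL {σ σ' τ : Tm} : Step σ σ' → Step (.union σ τ) (.union σ' τ)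
| unionR {σ τ τ' : Tm} : Step τ τ' → Step (.union σ τ) (.union σ τ')
| lamL {σ σ' Δ : Tm} : Step σ σ' → Step (.lam σ Δ) (.lam σ' Δ)
| lamR {σ Δ Δ' : Tm} : Step Δ Δ' → Step (.lam σ Δ) (.lam σ Δ')
| rlamL {σ σ' Δ : Tm} : Step σ σ' → Step (.rlam σ Δ) (.rlam σ' Δ)
| rlamR {σ Δ Δ' : Tm} : Step Δ Δ' → Step (.rlam σ Δ) (.rlam σ Δ')
| appL {Δ₁ Δ₁' Δ₂ : Tm} : Step Δ₁ Δ₁' → Step (.app Δ₁ Δ₂) (.app Δ₁' Δ₂)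
| appR {Δ₁ Δ₂ Δ₂' : Tm} : Step Δ₂ Δ₂' → Step (.app Δ₁ Δ₂) (.app Δ₁ Δ₂')
| rappL {Δ₁ Δ₁' Δ₂ : Tm} : Step Δ₁ Δ₁' → Step (.rapp Δ₁ Δ₂) (.rapp Δ₁' Δ₂)
| rappR {Δ₁ Δ₂ Δ₂' : Tm} : Step Δ₂ Δ₂' → Step (.rapp Δ₁ Δ₂) (.rapp Δ₁ Δ₂')
| prlC {Δ Δ' : Tm} : Step Δ Δ' → Step (.prl Δ) (.prl Δ')
| prrC {Δ Δ' : Tm} : Step Δ Δ' → Step (.prr Δ) (.prr Δ')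
| inlL {σ σ' Δ : Tm} : Step σ σ' → Step (.inl σ Δ) (.inl σ' Δ)
| inlR {σ Δ Δ' : Tm} : Step Δ Δ' → Step (.inl σ Δ) (.inl σ Δ')
| inrL {σ σ' Δ : Tm} : Step σ σ' → Step (.inr σ Δ) (.inr σ' Δ)
| inrR {σ Δ Δ' : Tm} : Step Δ Δ' → Step (.inr σ Δ) (.inr σ Δ')
| pairC {Δ₁ Δ₁' Δ₂ Δ₂' : Tm} :
    Step Δ₁ Δ₁' → Step Δ₂ Δ₂' → essence Δ₁' = essence Δ₂' →
    Step (.pair Δ₁ Δ₂) (.pair Δ₁' Δ₂')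
| copairC {Δ₁ Δ₁' Δ₂ Δ₂' : Tm} :
    Step Δ₁ Δ₁' → Step Δ₂ Δ₂' → essence Δ₁' = essence Δ₂' →
    Step (.copair Δ₁ Δ₂) (.copair Δ₁' Δ₂')

/-- Definitional equality =_Δ : the symmetric reflexive transitive closure
    of →_Δ. -/
def DefEq : Tm → Tm → Prop := Conv Step

/-- Strong normalization w.r.t. →_Δ. -/
def SNTm (t : Tm) : Prop := Acc (fun a b => Step b a) t

/-- Signature entries: kind declarations a:K and type declarations c:σ. -/
inductive SigEntry : Type
| kd (a : ℕ) (K : Tm)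
| ty (c : ℕ) (σ : Tm)
deriving DecidableEq

abbrev Sig := List SigEntry
abbrev Ctx := List Tm

/-- c is declared in the signature. -/
def inDom (S : Sig) (c : ℕ) : Prop :=
  (∃ K, SigEntry.kd c K ∈ S) ∨ (∃ σ, SigEntry.ty c σ ∈ S)

/-- Context lookup, with the appropriate lifting. -/
inductive VarTy : Ctx → ℕ → Tm → Prop
| zero {Γ : Ctx} {σ : Tm} : VarTy (σ :: Γ) 0 (Tm.lift 0 σ)
| succ {Γ : Ctx} {n : ℕ} {σ τ : Tm} :
    VarTy Γ n σ → VarTy (τ :: Γ) (n+1) (Tm.lift 0 σ)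

mutual
/-- Σ is a valid signature. -/
inductive SigOk : Sig → Prop
| nil : SigOk []
| kd {S : Sig} {a : ℕ} {K : Tm} :
    SigOk S → KindOk S [] K → ¬ inDom S a → SigOk (.kd a K :: S)
| ty {S : Sig} {c : ℕ} {σ : Tm} :
    SigOk S → FamTy S [] σ .type → ¬ inDom S c → SigOk (.ty c σ :: S)

/-- Γ is a valid context in Σ. -/
inductive CtxOk : Sig → Ctx → Prop
| nil {S : Sig} : SigOk S → CtxOk S []
| cons {S : Sig} {Γ : Ctx} {σ : Tm} :
    CtxOk S Γ → FamTy S Γ σ .type → CtxOk S (σ :: Γ)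

/-- K is a kind in Γ and Σ. -/
inductive KindOk : Sig → Ctx → Tm → Prop
| type {S : Sig} {Γ : Ctx} : CtxOk S Γ → KindOk S Γ .type
| pi {S : Sig} {Γ : Ctx} {σ K : Tm} :
    FamTy S Γ σ .type → KindOk S (σ :: Γ) K → KindOk S Γ (.pi σ K)

/-- σ has kind K in Γ and Σ. -/
inductive FamTy : Sig → Ctx → Tm → Tm → Prop
| const {S : Sig} {Γ : Ctx} {a : ℕ} {K : Tm} :
    CtxOk S Γ → SigEntry.kd a K ∈ S → FamTy S Γ (.const a) K
| pi {S : Sig} {Γ : Ctx} {σ τ : Tm} :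
    FamTy S Γ σ .type → FamTy S (σ :: Γ) τ .type → FamTy S Γ (.pi σ τ) .type
| app {S : Sig} {Γ : Ctx} {σ τ K Δ : Tm} :
    FamTy S Γ σ (.pi τ K) → ObjTy S Γ Δ τ →
    FamTy S Γ (.app σ Δ) (Tm.subst 0 Δ K)
| rarr {S : Sig} {Γ : Ctx} {σ τ : Tm} :
    FamTy S Γ σ .type → FamTy S Γ τ .type → FamTy S Γ (.rarr σ τ) .type
| inter {S : Sig} {Γ : Ctx} {σ τ : Tm} :
    FamTy S Γ σ .type → FamTy S Γ τ .type → FamTy S Γ (.inter σ τ) .type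
| union {S : Sig} {Γ : Ctx} {σ τ : Tm} :
    FamTy S Γ σ .type → FamTy S Γ τ .type → FamTy S Γ (.union σ τ) .type
| conv {S : Sig} {Γ : Ctx} {σ K₁ K₂ : Tm} :
    FamTy S Γ σ K₁ → KindOk S Γ K₂ → DefEq K₁ K₂ → FamTy S Γ σ K₂

/-- Δ has type σ in Γ and Σ. -/
inductive ObjTy : Sig → Ctx → Tm → Tm → Prop
| const {S : Sig} {Γ : Ctx} {c : ℕ} {σ : Tm} :
    CtxOk S Γ → SigEntry.ty c σ ∈ S → ObjTy S Γ (.const c) σ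
| var {S : Sig} {Γ : Ctx} {n : ℕ} {σ : Tm} :
    CtxOk S Γ → VarTy Γ n σ → ObjTy S Γ (.var n) σ
| lam {S : Sig} {Γ : Ctx} {σ τ Δ : Tm} :
    ObjTy S (σ :: Γ) Δ τ → ObjTy S Γ (.lam σ Δ) (.pi σ τ)
| app {S : Sig} {Γ : Ctx} {σ τ Δ₁ Δ₂ : Tm} :
    ObjTy S Γ Δ₁ (.pi σ τ) → ObjTy S Γ Δ₂ σ →
    ObjTy S Γ (.app Δ₁ Δ₂) (Tm.subst 0 Δ₂ τ)
| rlam {S : Sig} {Γ : Ctx} {σ τ Δ : Tm} :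
    ObjTy S (σ :: Γ) Δ (Tm.lift 0 τ) →
    Lam.BetaEtaEq (essence Δ) (.var 0) →
    ObjTy S Γ (.rlam σ Δ) (.rarr σ τ)
| rapp {S : Sig} {Γ : Ctx} {σ τ Δ₁ Δ₂ : Tm} :
    ObjTy S Γ Δ₁ (.rarr σ τ) → ObjTy S Γ Δ₂ σ → ObjTy S Γ (.rapp Δ₁ Δ₂) τ
| pair {S : Sig} {Γ : Ctx} {σ τ Δ₁ Δ₂ : Tm} :
    ObjTy S Γ Δ₁ σ → ObjTy S Γ Δ₂ τ →
    Lam.BetaEtaEq (essence Δ₁) (essence Δ₂) →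
    ObjTy S Γ (.pair Δ₁ Δ₂) (.inter σ τ)
| prl {S : Sig} {Γ : Ctx} {σ τ Δ : Tm} :
    ObjTy S Γ Δ (.inter σ τ) → ObjTy S Γ (.prl Δ) σ
| prr {S : Sig} {Γ : Ctx} {σ τ Δ : Tm} :
    ObjTy S Γ Δ (.inter σ τ) → ObjTy S Γ (.prr Δ) τ
| inl {S : Sig} {Γ : Ctx} {σ τ Δ : Tm} :
    ObjTy S Γ Δ σ → FamTy S Γ (.union σ τ) .type →
    ObjTy S Γ (.inl τ Δ) (.union σ τ)
| inr {S : Sig} {Γ : Ctx} {σ τ Δ : Tm} :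
    ObjTy S Γ Δ τ → FamTy S Γ (.union σ τ) .type →
    ObjTy S Γ (.inr σ Δ) (.union σ τ)
| copair {S : Sig} {Γ : Ctx} {σ τ ρ Δ₁ Δ₂ : Tm} :
    ObjTy S Γ Δ₁
      (.pi σ (Tm.subst 0 (.inl (Tm.lift 0 τ) (.var 0)) (Tm.lift 1 ρ))) →
    ObjTy S Γ Δ₂
      (.pi τ (Tm.subst 0 (.inr (Tm.lift 0 σ) (.var 0)) (Tm.lift 1 ρ))) →
    FamTy S (.union σ τ :: Γ) ρ .type →
    Lam.BetaEtaEq (essence Δ₁) (essence Δ₂) →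
    ObjTy S Γ (.copair Δ₁ Δ₂) (.pi (.union σ τ) ρ)
| conv {S : Sig} {Γ : Ctx} {σ τ Δ : Tm} :
    ObjTy S Γ Δ σ → FamTy S Γ τ .type → DefEq σ τ → ObjTy S Γ Δ τ
end

/-- The dependency-erasing translation |·| on families and kinds. -/
def eraseTy : Tm → BTy
| .type => .top
| .pi σ τ => .arr (eraseTy σ) (eraseTy τ)
| .rarr σ τ => .arr (eraseTy σ) (eraseTy τ)
| .inter σ τ => .inter (eraseTy σ) (eraseTy τ)
| .union σ τ => .union (eraseTy σ) (eraseTy τ)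
| .const a => .atom a
| .app σ _ => eraseTy σ
| _ => .top

/-- The forgetful translation ‖·‖ of LF_Δ objects and families into pure
    λ-terms with constants, flattening type annotations into redexes. -/
def tr : Tm → Lam
| .type => .const 0
| .pi σ τ => .app (.app (.cty (eraseTy σ)) (tr σ)) (.lam (tr τ))
| .rarr σ τ => .app (.app .cx (tr σ)) (tr τ)
| .inter σ τ => .app (.app .cx (tr σ)) (tr τ)
| .union σ τ => .app (.app .cx (tr σ)) (tr τ)
| .const c => .const c
| .var n => .var n
| .lam σ Δ => .app (.lam (.lam (Lam.lift 1 (tr Δ)))) (tr σ)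
| .rlam σ Δ => .app (.lam (.lam (Lam.lift 1 (tr Δ)))) (tr σ)
| .app Δ₁ Δ₂ => .app (tr Δ₁) (tr Δ₂)
| .rapp Δ₁ Δ₂ => .app (tr Δ₁) (tr Δ₂)
| .pair Δ₁ _ => tr Δ₁
| .copair Δ₁ _ => tr Δ₁
| .prl Δ => tr Δ
| .prr Δ => tr Δ
| .inl σ Δ => .app (.lam (Lam.lift 0 (tr Δ))) (tr σ)
| .inr σ Δ => .app (.lam (Lam.lift 0 (tr Δ))) (tr σ)

/-- Constant typing axioms of B⁺ induced by a signature. -/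
def sigXi (S : Sig) : ℕ → BTy → Prop :=
  fun c τ => (∃ σ, SigEntry.ty c σ ∈ S ∧ τ = eraseTy σ) ∨
             (∃ K, SigEntry.kd c K ∈ S ∧ τ = eraseTy K)

/-- Embedding of (non-dependent, relevance-free) B types as LF_Δ families. -/
def toFam : BTy → Tm
| .atom a => .const a
| .top => .const 0
| .arr σ τ => .pi (toFam σ) (Tm.lift 0 (toFam τ))
| .inter σ τ => .inter (toFam σ) (toFam τ)
| .union σ τ => .union (toFam σ) (toFam τ)

/-! ### Auxiliary development for the proof -/

section SNProof

open Lam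

/-- Immediate subterm relation on pure-term constructors. -/
inductive Imm : Lam → Lam → Prop
| appL {A B : Lam} : Imm A (.app A B)
| appR {A B : Lam} : Imm B (.app A B)
| lam {A : Lam} : Imm A (.lam A)

/-- Step-or-strict-subterm relation (descending). -/
def Rle (a b : Lam) : Prop := Lam.StepB b a ∨ Relation.TransGen Imm a b

lemma step_of_imm {N M N' : Lam} (h : Imm N M) (hs : StepB N N') :
    ∃ M', StepB M M' ∧ Imm N' M' := by
  cases h with
  | appL => exact ⟨_, .appL hs, .appL⟩
  | appR => exact ⟨_, .appR hs, .appR⟩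
  | lam => exact ⟨_, .lam hs, .lam⟩

lemma step_of_subt {N M : Lam} (h : Relation.ReflTransGen Imm N M) :
    ∀ N', StepB N N' → ∃ M', StepB M M' ∧ Relation.ReflTransGen Imm N' M' := by
  induction h using Relation.ReflTransGen.head_induction_on with
  | refl => exact fun N' hs => ⟨N', hs, .refl⟩
  | head himm _ ih =>
      intro N' hs
      obtain ⟨c', hc', himm'⟩ := step_of_imm himm hs
      obtain ⟨M', hM', hsub⟩ := ih c' hc'
      exact ⟨M', hM', .head himm' hsub⟩

lemma accRle {M : Lam} (h : Acc (fun a b => StepB b a) M) :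
    ∀ N, Relation.ReflTransGen Imm N M → Acc Rle N := by
  induction h with
  | intro M hM ih =>
    intro N
    induction N with
    | var n =>
        intro hNM
        refine Acc.intro _ ?_
        rintro y (hstep | htg)
        · obtain ⟨M', h1, h2⟩ := step_of_subt hNM y hstep
          exact ih M' h1 y h2
        · exfalso
          cases htg with
          | single h => cases h
          | tail _ h => cases h
    | const c =>
        intro hNM
        refine Acc.intro _ ?_
        rintro y (hstep | htg)
        · obtain ⟨M', h1, h2⟩ := step_of_subt hNM y hstep
          exact ih M' h1 y h2
        · exfalso
          cases htg with
          | single h => cases h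
          | tail _ h => cases h
    | cx =>
        intro hNM
        refine Acc.intro _ ?_
        rintro y (hstep | htg)
        · obtain ⟨M', h1, h2⟩ := step_of_subt hNM y hstep
          exact ih M' h1 y h2
        · exfalso
          cases htg with
          | single h => cases h
          | tail _ h => cases h
    | cty σ =>
        intro hNM
        refine Acc.intro _ ?_
        rintro y (hstep | htg)
        · obtain ⟨M', h1, h2⟩ := step_of_subt hNM y hstep
          exact ih M' h1 y h2
        · exfalso
          cases htg with
          | single h => cases h
          | tail _ h => cases h
    | app A B ihA ihB =>
        intro hNM
        have hz : ∀ z, Imm z (Lam.app A B) → Acc Rle z := by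
          intro z hzimm
          cases hzimm with
          | appL => exact ihA (.head Imm.appL hNM)
          | appR => exact ihB (.head Imm.appR hNM)
        refine Acc.intro _ ?_
        rintro y (hstep | htg)
        · obtain ⟨M', h1, h2⟩ := step_of_subt hNM y hstep
          exact ih M' h1 y h2
        · cases htg with
          | single h => exact hz y h
          | tail htg' h => exact (hz _ h).inv (Or.inr htg')
    | lam P ihP =>
        intro hNM
        have hz : ∀ z, Imm z (Lam.lam P) → Acc Rle z := by
          intro z hzimm
          cases hzimm with
          | lam => exact ihP (.head Imm.lam hNM)
        refine Acc.intro _ ?_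
        rintro y (hstep | htg)
        · obtain ⟨M', h1, h2⟩ := step_of_subt hNM y hstep
          exact ih M' h1 y h2
        · cases htg with
          | single h => exact hz y h
          | tail htg' h => exact (hz _ h).inv (Or.inr htg')

/-! ### Purity lemmas -/

lemma pure_lift : ∀ (M : Lam) (c : ℕ), M.Pure → (Lam.lift c M).Pure
  | .var n, c, _ => by unfold Lam.lift; split <;> trivial
  | .app M N, c, h => ⟨pure_lift M c h.1, pure_lift N c h.2⟩
  | .lam M, c, h => pure_lift M (c+1) h

lemma pure_liftIter : ∀ (k : ℕ) (Q : Lam), Q.Pure → ((Lam.lift 0)^[k] Q).Pure := by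
  intro k
  induction k with
  | zero => exact fun Q h => h
  | succ k ih =>
      intro Q h
      rw [Function.iterate_succ_apply]
      exact ih _ (pure_lift Q 0 h)

lemma pure_subst : ∀ (P : Lam) (k : ℕ) (Q : Lam), P.Pure → Q.Pure → (Lam.subst k Q P).Pure
  | .var n, k, Q, _, hQ => by
      unfold Lam.subst
      split
      · trivial
      · split
        · exact pure_liftIter k Q hQ
        · trivial
  | .app M N, k, Q, h, hQ => ⟨pure_subst M k Q h.1 hQ, pure_subst N k Q h.2 hQ⟩
  | .lam M, k, Q, h, hQ => pure_subst M (k+1) Q h hQ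

lemma pure_step : ∀ {M M' : Lam}, StepB M M' → M.Pure → M'.Pure := by
  intro M M' h
  induction h with
  | @beta M N => exact fun h => pure_subst M 0 N h.1 h.2
  | appL _ ih => exact fun h => ⟨ih h.1, h.2⟩
  | appR _ ih => exact fun h => ⟨h.1, ih h.2⟩
  | lam _ ih => exact fun h => ih h

lemma pure_of_imm {N M : Lam} (h : Imm N M) (hM : M.Pure) : N.Pure := by
  cases h with
  | appL => exact hM.1
  | appR => exact hM.2
  | lam => exact hM

lemma pure_of_subt {N M : Lam} (h : Relation.ReflTransGen Imm N M) (hM : M.Pure) : N.Pure := by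
  induction h using Relation.ReflTransGen.head_induction_on with
  | refl => exact hM
  | head himm _ ih => exact pure_of_imm himm ih

/-! ### Bounds on free variables -/

def Bnd : ℕ → Lam → Prop
  | L, .var n => n < L
  | L, .app M N => Bnd L M ∧ Bnd L N
  | L, .lam M => Bnd (L+1) M
  | _, _ => True

lemma bnd_mono : ∀ (M : Lam) (L L' : ℕ), L ≤ L' → Bnd L M → Bnd L' M
  | .var n, L, L', h, hB => lt_of_lt_of_le hB h
  | .app M N, L, L', h, hB => ⟨bnd_mono M L L' h hB.1, bnd_mono N L L' h hB.2⟩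
  | .lam M, L, L', h, hB => bnd_mono M (L+1) (L'+1) (by omega) hB
  | .const _, _, _, _, _ => trivial
  | .cx, _, _, _, _ => trivial
  | .cty _, _, _, _, _ => trivial

lemma bnd_exists : ∀ M : Lam, ∃ L, Bnd L M
  | .var n => ⟨n+1, Nat.lt_succ_self n⟩
  | .app M N => by
      obtain ⟨L1, h1⟩ := bnd_exists M
      obtain ⟨L2, h2⟩ := bnd_exists N
      exact ⟨max L1 L2, bnd_mono M L1 _ (le_max_left _ _) h1,
        bnd_mono N L2 _ (le_max_right _ _) h2⟩
  | .lam M => by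
      obtain ⟨L, h⟩ := bnd_exists M
      exact ⟨L, bnd_mono M L (L+1) (Nat.le_succ L) h⟩
  | .const c => ⟨0, trivial⟩
  | .cx => ⟨0, trivial⟩
  | .cty σ => ⟨0, trivial⟩

/-! ### A strict intersection type system on pure λ-terms -/

/-- Selecting a component of an iterated intersection. -/
inductive Sel : BTy → BTy → Prop
| refl {σ : BTy} : Sel σ σ
| left {σ τ ρ : BTy} : Sel σ ρ → Sel (.inter σ τ) ρ
| right {σ τ ρ : BTy} : Sel τ ρ → Sel (.inter σ τ) ρ

lemma Sel.trans' : ∀ {a b c : BTy}, Sel a b → Sel b c → Sel a c := by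
  intro a b c h1
  induction h1 with
  | refl => exact fun h => h
  | left _ ih => exact fun h => .left (ih h)
  | right _ ih => exact fun h => .right (ih h)

/-- Extend a context (as a function) with a new type for variable 0. -/
def cns (σ : BTy) (g : ℕ → BTy) : ℕ → BTy := fun n => match n with
  | 0 => σ
  | n+1 => g n

/-- Intersection type assignment, contexts are total functions. -/
inductive J : (ℕ → BTy) → Lam → BTy → Prop
| var {g : ℕ → BTy} {n : ℕ} {σ : BTy} : Sel (g n) σ → J g (.var n) σ
| app {g : ℕ → BTy} {M N : Lam} {σ τ : BTy} :
    J g M (.arr σ τ) → J g N σ → J g (.app M N) τ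
| lam {g : ℕ → BTy} {M : Lam} {σ τ : BTy} :
    J (cns σ g) M τ → J g (.lam M) (.arr σ τ)
| inter {g : ℕ → BTy} {M : Lam} {σ τ : BTy} :
    J g M σ → J g M τ → J g M (.inter σ τ)

lemma J.sub {g : ℕ → BTy} {M : Lam} {τ : BTy} (h : J g M τ) :
    ∀ g' : ℕ → BTy, (∀ n, Sel (g' n) (g n)) → J g' M τ := by
  induction h with
  | var hsel => exact fun g' hg => .var (Sel.trans' (hg _) hsel)
  | app _ _ ih1 ih2 => exact fun g' hg => .app (ih1 g' hg) (ih2 g' hg)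
  | @lam g M σ τ _ ih =>
      intro g' hg
      exact .lam (ih (cns σ g') (fun n => by cases n with
        | zero => exact .refl
        | succ n => exact hg n))
  | inter _ _ ih1 ih2 => exact fun g' hg => .inter (ih1 g' hg) (ih2 g' hg)

def dropC (k : ℕ) (g : ℕ → BTy) : ℕ → BTy := fun n => g (n+k)
def insC (k : ℕ) (σ : BTy) (g : ℕ → BTy) : ℕ → BTy :=
  fun n => if n < k then g n else if n = k then σ else g (n-1)

lemma J.unlift : ∀ {g : ℕ → BTy} {T : Lam} {τ : BTy}, J g T τ →
    ∀ (c : ℕ) (Q : Lam), T = Lam.lift c Q →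
    J (fun n => if n < c then g n else g (n+1)) Q τ := by
  intro g T τ h
  induction h with
  | @var g m σ hsel =>
      intro c Q hT
      cases Q with
      | var n =>
          simp only [Lam.lift] at hT
          by_cases hn : n < c
          · rw [if_pos hn] at hT
            cases hT
            exact J.var (by simpa [hn] using hsel)
          · rw [if_neg hn] at hT
            cases hT
            exact J.var (by simpa [hn] using hsel)
      | app M N => exact absurd hT (by simp [Lam.lift])
      | lam M => exact absurd hT (by simp [Lam.lift])
      | const k => exact absurd hT (by simp [Lam.lift])
      | cx => exact absurd hT (by simp [Lam.lift])
      | cty s => exact absurd hT (by simp [Lam.lift])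
  | @app g M N σ τ _ _ ih1 ih2 =>
      intro c Q hT
      cases Q with
      | app M' N' =>
          simp only [Lam.lift, Lam.app.injEq] at hT
          obtain ⟨h1, h2⟩ := hT
          exact .app (ih1 c M' h1) (ih2 c N' h2)
      | var n =>
          simp only [Lam.lift] at hT
          split at hT <;> cases hT
      | lam M' => exact absurd hT (by simp [Lam.lift])
      | const k => exact absurd hT (by simp [Lam.lift])
      | cx => exact absurd hT (by simp [Lam.lift])
      | cty s => exact absurd hT (by simp [Lam.lift])
  | @lam g M σ τ _ ih =>
      intro c Q hT
      cases Q with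
      | lam M' =>
        simp only [Lam.lift, Lam.lam.injEq] at hT
        have h' := ih (c+1) M' hT
        have he : (fun n => if n < c+1 then (cns σ g) n else (cns σ g) (n+1))
            = cns σ (fun n => if n < c then g n else g (n+1)) := by
          funext n
          cases n with
          | zero => simp [cns]
          | succ n => by_cases hn : n < c <;> simp [cns, hn, Nat.succ_lt_succ_iff]
        rw [he] at h'
        exact .lam h'
      | var n =>
          simp only [Lam.lift] at hT
          split at hT <;> cases hT
      | app M' N' => exact absurd hT (by simp [Lam.lift])
      | const k => exact absurd hT (by simp [Lam.lift])
      | cx => exact absurd hT (by simp [Lam.lift])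
      | cty s => exact absurd hT (by simp [Lam.lift])
  | inter _ _ ih1 ih2 =>
      intro c Q hT
      exact .inter (ih1 c Q hT) (ih2 c Q hT)

lemma J.unliftIter : ∀ (k : ℕ) {g : ℕ → BTy} {Q : Lam} {τ : BTy},
    J g ((Lam.lift 0)^[k] Q) τ → J (dropC k g) Q τ := by
  intro k
  induction k with
  | zero => intro g Q τ h; exact h
  | succ k ih =>
      intro g Q τ h
      rw [Function.iterate_succ_apply] at h
      have h' := (ih h).unlift 0 Q rfl
      have he : (fun n => if n < 0 then dropC k g n else dropC k g (n+1)) = dropC (k+1) g := by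
        funext n
        simp only [Nat.not_lt_zero, if_false, dropC]
        congr 1
        omega
      rwa [he] at h'
/-! ### Subject expansion -/

lemma insC_at_lt {k : ℕ} {σ : BTy} {g : ℕ → BTy} {n : ℕ} (h : n < k) : insC k σ g n = g n := by
  simp [insC, h]

lemma insC_at_eq {k : ℕ} {σ : BTy} {g : ℕ → BTy} : insC k σ g k = σ := by
  simp [insC]

lemma sel_insC_left (k : ℕ) (σ₁ σ₂ : BTy) (g : ℕ → BTy) :
    ∀ n, Sel (insC k (.inter σ₁ σ₂) g n) (insC k σ₁ g n) := by
  intro n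
  unfold insC
  split
  · exact .refl
  · split
    · exact .left .refl
    · exact .refl

lemma sel_insC_right (k : ℕ) (σ₁ σ₂ : BTy) (g : ℕ → BTy) :
    ∀ n, Sel (insC k (.inter σ₁ σ₂) g n) (insC k σ₂ g n) := by
  intro n
  unfold insC
  split
  · exact .refl
  · split
    · exact .right .refl
    · exact .refl

lemma cns_insC (a : BTy) (k : ℕ) (σ : BTy) (g : ℕ → BTy) :
    cns a (insC k σ g) = insC (k+1) σ (cns a g) := by
  funext n
  cases n with
  | zero => simp [cns, insC]
  | succ n =>
      show insC k σ g n = insC (k+1) σ (cns a g) (n+1)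
      by_cases h1 : n < k
      · simp [insC, cns, h1, Nat.succ_lt_succ_iff]
      · by_cases h2 : n = k
        · subst h2
          simp [insC, cns, h1]
        · have h3 : ¬ n + 1 < k + 1 := by omega
          have h4 : ¬ n + 1 = k + 1 := by omega
          simp only [insC, if_neg h1, if_neg h2, if_neg h3, if_neg h4]
          obtain ⟨m, rfl⟩ : ∃ m, n = m + 1 := ⟨n - 1, by omega⟩
          rfl

lemma dropC_cns (a : BTy) (k : ℕ) (g : ℕ → BTy) :
    dropC (k+1) (cns a g) = dropC k g := by
  funext n
  rfl

lemma J.varMove : ∀ {g : ℕ → BTy} {T : Lam} {τ : BTy}, J g T τ →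
    ∀ m, T = .var m → ∀ (g' : ℕ → BTy) (n : ℕ), g' n = g m → J g' (.var n) τ := by
  intro g T τ h
  induction h with
  | var hsel =>
      intro m hT g' n hg
      cases hT
      exact .var (hg ▸ hsel)
  | inter _ _ ih1 ih2 =>
      intro m hT g' n hg
      exact .inter (ih1 m hT g' n hg) (ih2 m hT g' n hg)
  | app _ _ _ _ => intro m hT; simp at hT
  | lam _ _ => intro m hT; simp at hT

lemma J.expandVar {g : ℕ → BTy} {T : Lam} {τ : BTy} (h : J g T τ) (n k : ℕ) (Q : Lam) (ρ : BTy)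
    (hT : T = Lam.subst k Q (.var n)) (hQ : J (dropC k g) Q ρ) :
    ∃ σ, J (insC k σ g) (.var n) τ ∧ J (dropC k g) Q σ := by
  simp only [Lam.subst] at hT
  by_cases hk : n < k
  · rw [if_pos hk] at hT
    exact ⟨ρ, h.varMove n hT (insC k ρ g) n (insC_at_lt hk), hQ⟩
  · by_cases he : n = k
    · subst he
      rw [if_neg hk, if_pos rfl] at hT
      subst hT
      refine ⟨τ, .var ?_, J.unliftIter n h⟩
      rw [insC_at_eq]
      exact .refl
    · rw [if_neg hk, if_neg he] at hT
      refine ⟨ρ, h.varMove (n-1) hT (insC k ρ g) n ?_, hQ⟩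
      simp [insC, hk, he]

lemma J.expand : ∀ {g : ℕ → BTy} {T : Lam} {τ : BTy}, J g T τ →
    ∀ (P : Lam) (k : ℕ) (Q : Lam) (ρ : BTy),
    T = Lam.subst k Q P → J (dropC k g) Q ρ →
    ∃ σ, J (insC k σ g) P τ ∧ J (dropC k g) Q σ := by
  intro g T τ h
  induction h with
  | @var g m σ hsel =>
      intro P k Q ρ hT hQ
      cases P with
      | var n => exact (J.var hsel).expandVar n k Q ρ hT hQ
      | app P1 P2 => simp [Lam.subst] at hT
      | lam P' => simp [Lam.subst] at hT
      | const c => simp [Lam.subst] at hT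
      | cx => simp [Lam.subst] at hT
      | cty s => simp [Lam.subst] at hT
  | @app g U V s t h1 h2 ih1 ih2 =>
      intro P k Q ρ hT hQ
      cases P with
      | var n => exact (J.app h1 h2).expandVar n k Q ρ hT hQ
      | app P1 P2 =>
          simp only [Lam.subst, Lam.app.injEq] at hT
          obtain ⟨e1, e2⟩ := hT
          obtain ⟨σ1, j1, q1⟩ := ih1 P1 k Q ρ e1 hQ
          obtain ⟨σ2, j2, q2⟩ := ih2 P2 k Q ρ e2 hQ
          exact ⟨.inter σ1 σ2,
            .app (j1.sub _ (sel_insC_left k σ1 σ2 g)) (j2.sub _ (sel_insC_right k σ1 σ2 g)),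
            .inter q1 q2⟩
      | lam P' => simp [Lam.subst] at hT
      | const c => simp [Lam.subst] at hT
      | cx => simp [Lam.subst] at hT
      | cty s => simp [Lam.subst] at hT
  | @lam g B a t hb ihb =>
      intro P k Q ρ hT hQ
      cases P with
      | var n => exact (J.lam hb).expandVar n k Q ρ hT hQ
      | lam P' =>
          simp only [Lam.subst, Lam.lam.injEq] at hT
          have hQ' : J (dropC (k+1) (cns a g)) Q ρ := by
            rw [dropC_cns]; exact hQ
          obtain ⟨σ, j, q⟩ := ihb P' (k+1) Q ρ hT hQ'
          rw [← cns_insC] at j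
          refine ⟨σ, .lam j, ?_⟩
          rwa [dropC_cns] at q
      | app P1 P2 => simp [Lam.subst] at hT
      | const c => simp [Lam.subst] at hT
      | cx => simp [Lam.subst] at hT
      | cty s => simp [Lam.subst] at hT
  | @inter g T s t h1 h2 ih1 ih2 =>
      intro P k Q ρ hT hQ
      obtain ⟨σ1, j1, q1⟩ := ih1 P k Q ρ hT hQ
      obtain ⟨σ2, j2, q2⟩ := ih2 P k Q ρ hT hQ
      exact ⟨.inter σ1 σ2,
        .inter (j1.sub _ (sel_insC_left k σ1 σ2 g)) (j2.sub _ (sel_insC_right k σ1 σ2 g)),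
        .inter q1 q2⟩

lemma J.expand0 {g : ℕ → BTy} {T : Lam} {τ : BTy} (h : J g T τ) {P Q : Lam} {ρ : BTy}
    (hT : T = Lam.subst 0 Q P) (hQ : J g Q ρ) :
    ∃ σ, J (cns σ g) P τ ∧ J g Q σ := by
  obtain ⟨σ, h1, h2⟩ := h.expand P 0 Q ρ hT hQ
  have he : insC 0 σ g = cns σ g := by
    funext n
    cases n with
    | zero => simp [insC, cns]
    | succ n => simp [insC, cns]
  rw [he] at h1
  exact ⟨σ, h1, h2⟩

lemma J.expandBase {g : ℕ → BTy} {τ : BTy} {P Q : Lam} {ρ : BTy}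
    (h : J g (Lam.subst 0 Q P) τ) (hQ : J g Q ρ) : J g (.app (.lam P) Q) τ := by
  obtain ⟨σ, h1, h2⟩ := h.expand0 rfl hQ
  exact .app (.lam h1) h2
/-! ### Applicative spines and head redexes -/

def apps : Lam → List Lam → Lam
  | S, [] => S
  | S, B :: Bs => .app (apps S Bs) B

lemma step_apps {X Y : Lam} (h : StepB X Y) : ∀ Bs : List Lam, StepB (apps X Bs) (apps Y Bs) := by
  intro Bs
  induction Bs with
  | nil => exact h
  | cons B Bs ih => exact .appL ih

lemma sub_apps (X : Lam) : ∀ Bs : List Lam, Relation.ReflTransGen Imm X (apps X Bs) := by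
  intro Bs
  induction Bs with
  | nil => exact .refl
  | cons B Bs ih => exact .tail ih Imm.appL

def Neutral : Lam → Prop
  | .var _ => True
  | .app A _ => Neutral A
  | _ => False

lemma headRedex : ∀ (A : Lam), A.Pure → ¬ Neutral A →
    (∃ P, A = .lam P) ∨ (∃ P Q Bs, A = apps (.app (.lam P) Q) Bs)
  | .var n, _, hN => absurd trivial hN
  | .lam P, _, _ => Or.inl ⟨P, rfl⟩
  | .app A1 A2, hP, hN => by
      rcases headRedex A1 hP.1 hN with ⟨P, rfl⟩ | ⟨P, Q, Bs, rfl⟩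
      · exact Or.inr ⟨P, A2, [], rfl⟩
      · exact Or.inr ⟨P, Q, A2 :: Bs, rfl⟩
  | .const c, hP, _ => hP.elim
  | .cx, hP, _ => hP.elim
  | .cty s, hP, _ => hP.elim

lemma J.expandApps : ∀ {g : ℕ → BTy} {T : Lam} {τ : BTy}, J g T τ →
    ∀ (P Q : Lam) (Bs : List Lam) (ρ : BTy), J g Q ρ →
    T = apps (Lam.subst 0 Q P) Bs →
    J g (apps (.app (.lam P) Q) Bs) τ := by
  intro g T τ h
  induction h with
  | @var g n σ hsel =>
      intro P Q Bs ρ hQ hT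
      cases Bs with
      | nil => exact (hT ▸ (J.var hsel)).expandBase hQ
      | cons B Bs => simp [apps] at hT
  | @app g U V s t h1 h2 ih1 ih2 =>
      intro P Q Bs ρ hQ hT
      cases Bs with
      | nil => exact (hT ▸ (J.app h1 h2)).expandBase hQ
      | cons B Bs =>
          simp only [apps, Lam.app.injEq] at hT
          obtain ⟨e1, e2⟩ := hT
          exact .app (ih1 P Q Bs ρ hQ e1) (e2 ▸ h2)
  | @lam g B a t hb ihb =>
      intro P Q Bs ρ hQ hT
      cases Bs with
      | nil => exact (hT ▸ (J.lam hb)).expandBase hQ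
      | cons B Bs => simp [apps] at hT
  | inter h1 h2 ih1 ih2 =>
      intro P Q Bs ρ hQ hT
      exact .inter (ih1 P Q Bs ρ hQ hT) (ih2 P Q Bs ρ hQ hT)

/-! ### Completeness: every pure SN term is typable -/

theorem keyTyping : ∀ M : Lam, Acc Rle M → M.Pure →
    (∃ g σ, J g M σ) ∧ (Neutral M → ∀ τ, ∃ g, J g M τ) := by
  intro M hAcc
  induction hAcc with
  | intro M hM ih =>
    intro hPure
    cases M with
    | var n =>
        exact ⟨⟨fun _ => .atom 0, .atom 0, .var .refl⟩,
          fun _ τ => ⟨fun _ => τ, .var .refl⟩⟩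
    | const c => exact hPure.elim
    | cx => exact hPure.elim
    | cty s => exact hPure.elim
    | lam P =>
        obtain ⟨g, σ, hJ⟩ := (ih P (Or.inr (.single .lam)) hPure).1
        refine ⟨⟨fun n => g (n+1), .arr (g 0) σ, ?_⟩, fun hN => hN.elim⟩
        apply J.lam
        have he : cns (g 0) (fun n => g (n+1)) = g := by
          funext n; cases n <;> rfl
        rwa [he]
    | app A B =>
        obtain ⟨hPA, hPB⟩ := hPure
        obtain ⟨gB, σB, hB⟩ := (ih B (Or.inr (.single .appR)) hPB).1
        by_cases hNA : Neutral A
        · have F : ∀ τ, ∃ g, J g (.app A B) τ := by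
            intro τ
            obtain ⟨gA, hA⟩ := (ih A (Or.inr (.single .appL)) hPA).2 hNA (.arr σB τ)
            exact ⟨fun n => .inter (gA n) (gB n),
              .app (hA.sub (fun n => BTy.inter (gA n) (gB n)) (fun n => .left .refl))
                   (hB.sub (fun n => BTy.inter (gA n) (gB n)) (fun n => .right .refl))⟩
          obtain ⟨g, h⟩ := F (.atom 0)
          exact ⟨⟨g, .atom 0, h⟩, fun _ => F⟩
        · have main : ∀ (P Q : Lam) (Bs : List Lam),
              Lam.app A B = apps (.app (.lam P) Q) Bs → ∃ g σ, J g (Lam.app A B) σ := by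
            intro P Q Bs hMEq
            have hstep : StepB (Lam.app A B) (apps (Lam.subst 0 Q P) Bs) := by
              rw [hMEq]; exact step_apps .beta Bs
            have hPure' : (apps (Lam.subst 0 Q P) Bs).Pure :=
              pure_step hstep ⟨hPA, hPB⟩
            obtain ⟨g1, τ1, h1⟩ := (ih _ (Or.inl hstep) hPure').1
            have hsubQ : Relation.TransGen Imm Q (Lam.app A B) := by
              have h2' : Relation.ReflTransGen Imm (Lam.app (.lam P) Q)
                  (apps (.app (.lam P) Q) Bs) := sub_apps _ Bs
              rw [← hMEq] at h2'
              exact Relation.TransGen.head' Imm.appR h2'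
            have hPQ : Q.Pure := pure_of_subt hsubQ.to_reflTransGen ⟨hPA, hPB⟩
            obtain ⟨gQ, ρ, hQ⟩ := (ih Q (Or.inr hsubQ) hPQ).1
            refine ⟨fun n => .inter (g1 n) (gQ n), τ1, ?_⟩
            have h1' := h1.sub (fun n => BTy.inter (g1 n) (gQ n)) (fun n => Sel.left .refl)
            have hQ' := hQ.sub (fun n => BTy.inter (g1 n) (gQ n)) (fun n => Sel.right .refl)
            have := h1'.expandApps P Q Bs ρ hQ' rfl
            rwa [← hMEq] at this
          have hres : ∃ g σ, J g (Lam.app A B) σ := by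
            rcases headRedex A hPA hNA with ⟨P, rfl⟩ | ⟨P, Q, Bs, rfl⟩
            · exact main P B [] rfl
            · exact main P Q (B :: Bs) rfl
          exact ⟨hres, fun hN => absurd hN hNA⟩
/-! ### Translation into LF_Δ -/

def Sg : Sig := [SigEntry.kd 0 .type]

lemma SgOk : SigOk Sg := by
  refine SigOk.kd .nil (.type (.nil .nil)) ?_
  rintro (⟨K, hK⟩ | ⟨σ, hσ⟩)
  · simp at hK
  · simp at hσ

/-- Interpretation of B types as (closed, non-dependent) LF_Δ families. -/
def fam : BTy → Tm
  | .atom _ => .const 0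
  | .top => .const 0
  | .arr σ τ => .pi (fam σ) (fam τ)
  | .inter σ τ => .inter (fam σ) (fam τ)
  | .union σ τ => .inter (fam σ) (fam τ)

lemma fam_lift : ∀ (b : BTy) (c : ℕ), Tm.lift c (fam b) = fam b
  | .atom a, c => rfl
  | .top, c => rfl
  | .arr σ τ, c => by simp [fam, Tm.lift, fam_lift σ c, fam_lift τ (c+1)]
  | .inter σ τ, c => by simp [fam, Tm.lift, fam_lift σ c, fam_lift τ c]
  | .union σ τ, c => by simp [fam, Tm.lift, fam_lift σ c, fam_lift τ c]

lemma fam_subst : ∀ (b : BTy) (k : ℕ) (N : Tm), Tm.subst k N (fam b) = fam b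
  | .atom a, k, N => rfl
  | .top, k, N => rfl
  | .arr σ τ, k, N => by simp [fam, Tm.subst, fam_subst σ k N, fam_subst τ (k+1) N]
  | .inter σ τ, k, N => by simp [fam, Tm.subst, fam_subst σ k N, fam_subst τ k N]
  | .union σ τ, k, N => by simp [fam, Tm.subst, fam_subst σ k N, fam_subst τ k N]

lemma famOk : ∀ (b : BTy) {Γ : Ctx}, CtxOk Sg Γ → FamTy Sg Γ (fam b) .type := by
  intro b
  induction b with
  | atom a => exact fun h => .const h (by simp [Sg])
  | top => exact fun h => .const h (by simp [Sg])
  | arr σ τ ihσ ihτ =>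
      intro Γ h
      exact .pi (ihσ h) (ihτ (.cons h (ihσ h)))
  | inter σ τ ihσ ihτ => exact fun h => .inter (ihσ h) (ihτ h)
  | union σ τ ihσ ihτ => exact fun h => .inter (ihσ h) (ihτ h)

lemma ctxOkMap : ∀ l : List BTy, CtxOk Sg (l.map fam) := by
  intro l
  induction l with
  | nil => exact .nil SgOk
  | cons a l ih => exact .cons ih (famOk a ih)

lemma varTyFam : ∀ (l : List BTy) (n : ℕ) (b : BTy), l[n]? = some b →
    VarTy (l.map fam) n (fam b) := by
  intro l
  induction l with
  | nil => intro n b h; simp at h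
  | cons a l ih =>
      intro n b h
      cases n with
      | zero =>
          simp only [List.getElem?_cons_zero] at h
          injection h with h
          subst h
          have := @VarTy.zero (l.map fam) (fam a)
          rwa [fam_lift] at this
      | succ n =>
          simp only [List.getElem?_cons_succ] at h
          have := VarTy.succ (σ := fam b) (τ := fam a) (ih n b h)
          rwa [fam_lift] at this

lemma selObj : ∀ {b c : BTy}, Sel b c → ∀ {Γ : Ctx} {Δ : Tm}, ObjTy Sg Γ Δ (fam b) →
    ∃ Δ', ObjTy Sg Γ Δ' (fam c) ∧ essence Δ' = essence Δ := by
  intro b c h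
  induction h with
  | refl => exact fun h => ⟨_, h, rfl⟩
  | @left σ τ ρ _ ih =>
      intro Γ Δ h
      obtain ⟨Δ', h', e⟩ := ih (ObjTy.prl (σ := fam σ) (τ := fam τ) h)
      exact ⟨Δ', h', e⟩
  | @right σ τ ρ _ ih =>
      intro Γ Δ h
      obtain ⟨Δ', h', e⟩ := ih (ObjTy.prr (σ := fam σ) (τ := fam τ) h)
      exact ⟨Δ', h', e⟩

lemma translate : ∀ {g : ℕ → BTy} {M : Lam} {σ : BTy}, J g M σ →
    ∀ l : List BTy, Bnd l.length M → (∀ n, n < l.length → l[n]? = some (g n)) →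
    ∃ Δ, ObjTy Sg (l.map fam) Δ (fam σ) ∧ essence Δ = M := by
  intro g M σ h
  induction h with
  | @var g n σ hsel =>
      intro l hB hl
      have hn : n < l.length := hB
      have h0 : ObjTy Sg (l.map fam) (.var n) (fam (g n)) :=
        .var (ctxOkMap l) (varTyFam l n (g n) (hl n hn))
      obtain ⟨Δ, hΔ, he⟩ := selObj hsel h0
      exact ⟨Δ, hΔ, he⟩
  | @app g M N σ τ h1 h2 ih1 ih2 =>
      intro l hB hl
      obtain ⟨Δ₁, o1, e1⟩ := ih1 l hB.1 hl
      obtain ⟨Δ₂, o2, e2⟩ := ih2 l hB.2 hl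
      refine ⟨.app Δ₁ Δ₂, ?_, by simp [essence, e1, e2]⟩
      have happ := ObjTy.app (σ := fam σ) (τ := fam τ) o1 o2
      rwa [fam_subst] at happ
  | @lam g M a τ hb ihb =>
      intro l hB hl
      obtain ⟨Δ, o1, e1⟩ := ihb (a :: l)
        (by simpa [Bnd] using hB)
        (by
          intro n hn
          cases n with
          | zero => rfl
          | succ n =>
              simp only [List.getElem?_cons_succ]
              exact hl n (by simpa using hn))
      exact ⟨.lam (fam a) Δ, ObjTy.lam o1, by simp [essence, e1]⟩
  | @inter g M σ τ h1 h2 ih1 ih2 =>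
      intro l hB hl
      obtain ⟨Δ₁, o1, e1⟩ := ih1 l hB hl
      obtain ⟨Δ₂, o2, e2⟩ := ih2 l hB hl
      refine ⟨.pair Δ₁ Δ₂, ObjTy.pair o1 o2 ?_, by simpa [essence] using e1⟩
      rw [e1, e2]
      exact Conv.refl _
end SNProof

/-- Every strongly β-normalizing pure λ-term can be annotated so as to be the
    essence of a well-typed LF_Δ object. -/
theorem sn_term_is_essence_of_typed :
    ∀ M : Lam, M.Pure → M.SNBeta →
      ∃ (S : Sig) (Γ : Ctx) (Δ σ : Tm), ObjTy S Γ Δ σ ∧ essence Δ = M := by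
  intro M hPure hSN
  have hAcc : Acc Rle M := accRle hSN M .refl
  obtain ⟨⟨g, σ, hJ⟩, -⟩ := keyTyping M hAcc hPure
  obtain ⟨L, hL⟩ := bnd_exists M
  set l : List BTy := (List.range L).map g with hldef
  have hlen : l.length = L := by simp [hldef]
  have hget : ∀ n, n < l.length → l[n]? = some (g n) := by
    intro n hn
    rw [hlen] at hn
    simp only [hldef, List.getElem?_map, List.getElem?_range hn,
      Option.map_some]
  obtain ⟨Δ, hO, hE⟩ := translate hJ l (by rw [hlen]; exact hL) hget
  exact ⟨Sg, l.map fam, Δ, fam σ, hO, hE⟩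

end LFDelta
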